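/- Let m ∈ ℕ, A ⊆ ℕ^m be a complete set of multi-indices, and let P_A be nodes generated per the essential assumptions. Let f : ℝ^m → ℝ be any function. Then there exist unique coefficients c_α ∈ ℝ, α ∈ A, such that the polynomial Q_{f,A}(x) = Σ_{α∈A} c_α N_α(x) satisfies Q_{f,A}(p_β) = f(p_β) for all β ∈ A; moreover Q_{f,A} is the unique polynomial in Π_A interpolating f on P_A. -/

import Mathlib

open MvPolynomial
open scoped Classical

noncomputable section

/-- The polynomial space `Π_A` spanned by the monomials `x^α`, `α ∈ A`. -/
def PiA (m : ℕ) (A : Finset (Fin m → ℕ)) : Submodule ℝ (MvPolynomial (Fin m) ℝ) :=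
  Submodule.span ℝ ((fun α : Fin m → ℕ => ∏ i, X i ^ α i) '' ↑A)

/-- `A ⊆ ℕ^m` is a complete (downward closed) set of multi-indices. -/
def CompleteIdx {m : ℕ} (A : Finset (Fin m → ℕ)) : Prop :=
  ∀ α ∈ A, ∀ β : Fin m → ℕ, (∀ i, β i ≤ α i) → β ∈ A

/-- The node `p_α = (p_{α₁,1},…,p_{α_m,m})` generated from generating nodes `p`. -/
def node {m : ℕ} (p : Fin m → ℕ → ℝ) (α : Fin m → ℕ) : Fin m → ℝ := fun i => p i (α i)

/-- The generating nodes `p_{0,i},…,p_{n_i,i}`, `n_i = max_{α∈A} α_i`, are pairwise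
distinct in each dimension `i` (essential assumptions, Definition 2.8). -/
def GenDistinct {m : ℕ} (A : Finset (Fin m → ℕ)) (p : Fin m → ℕ → ℝ) : Prop :=
  ∀ i : Fin m, ∀ j k : ℕ, j ≤ A.sup (fun α => α i) → k ≤ A.sup (fun α => α i) →
    p i j = p i k → j = k

/-- The multivariate Newton polynomial `N_α(x) = ∏_i ∏_{j<α_i} (x_i - p_{j,i})`. -/
def newton {m : ℕ} (p : Fin m → ℕ → ℝ) (α : Fin m → ℕ) : MvPolynomial (Fin m) ℝ :=
  ∏ i, ∏ j ∈ Finset.range (α i), (X i - C (p i j))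

/-- `P` is unisolvent with respect to the polynomial subspace `W`: the only
polynomial in `W` vanishing on all of `P` is `0`. -/
def Unisolvent {m : ℕ} (P : Set (Fin m → ℝ)) (W : Submodule ℝ (MvPolynomial (Fin m) ℝ)) :
    Prop :=
  ∀ Q ∈ W, (∀ x ∈ P, eval x Q = 0) → Q = 0

/- ### Auxiliary lemmas -/

lemma eval_newton {m : ℕ} (p : Fin m → ℕ → ℝ) (α β : Fin m → ℕ) :
    eval (node p β) (newton p α) = ∏ i, ∏ j ∈ Finset.range (α i), (p i (β i) - p i j) := by
  simp [newton, node]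

lemma eval_newton_ne_zero {m : ℕ} {A : Finset (Fin m → ℕ)} {p : Fin m → ℕ → ℝ}
    (hp : GenDistinct A p) {α β : Fin m → ℕ} (hβ : β ∈ A) (hle : ∀ i, α i ≤ β i) :
    eval (node p β) (newton p α) ≠ 0 := by
  rw [eval_newton]
  refine Finset.prod_ne_zero_iff.2 fun i _ => Finset.prod_ne_zero_iff.2 fun j hj => ?_
  have hj' : j < α i := Finset.mem_range.1 hj
  refine sub_ne_zero.2 fun h => ?_
  have hβs : β i ≤ A.sup (fun α => α i) := Finset.le_sup (f := fun α : Fin m → ℕ => α i) hβ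
  have := hp i (β i) j hβs (le_trans (le_of_lt (lt_of_lt_of_le hj' (hle i))) hβs) h
  exact (Nat.ne_of_lt (lt_of_lt_of_le hj' (hle i))).symm this

lemma eval_newton_eq_zero {m : ℕ} (p : Fin m → ℕ → ℝ) {α β : Fin m → ℕ} (i : Fin m)
    (h : β i < α i) : eval (node p β) (newton p α) = 0 := by
  rw [eval_newton]
  refine Finset.prod_eq_zero (Finset.mem_univ i) ?_
  exact Finset.prod_eq_zero (Finset.mem_range.2 h) (by ring)

lemma degreeOf_prod_le' {m : ℕ} {ι : Type*} (s : Finset ι) (g : ι → MvPolynomial (Fin m) ℝ)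
    (i : Fin m) : degreeOf i (∏ k ∈ s, g k) ≤ ∑ k ∈ s, degreeOf i (g k) := by
  classical
  induction s using Finset.cons_induction with
  | empty => rw [Finset.prod_empty, Finset.sum_empty, ← C_1, degreeOf_C]
  | cons a s ha ih =>
    rw [Finset.prod_cons, Finset.sum_cons]
    exact (degreeOf_mul_le _ _ _).trans (add_le_add le_rfl ih)

lemma degreeOf_X_sub_C_le {m : ℕ} (i k : Fin m) (c : ℝ) :
    degreeOf i (X k - C c : MvPolynomial (Fin m) ℝ) ≤ if i = k then 1 else 0 := by
  rw [degreeOf_le_iff]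
  intro d hd
  rcases Finset.mem_union.1 (MvPolynomial.support_sub _ _ _ hd) with h | h
  · rw [support_X, Finset.mem_singleton] at h
    subst h
    rcases eq_or_ne i k with rfl | hik
    · simp [Finsupp.single_apply]
    · simp [Finsupp.single_apply, hik, Ne.symm hik]
  · rw [C_apply] at h
    have h0 : d = 0 := Finset.mem_singleton.1 (support_monomial_subset h)
    simp [h0]

lemma degreeOf_newton_le {m : ℕ} (p : Fin m → ℕ → ℝ) (α : Fin m → ℕ) (i : Fin m) :
    degreeOf i (newton p α) ≤ α i := by
  refine (degreeOf_prod_le' _ _ _).trans ?_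
  have h1 : ∀ k, degreeOf i (∏ j ∈ Finset.range (α k), (X k - C (p k j)) :
      MvPolynomial (Fin m) ℝ) ≤ if i = k then α k else 0 := by
    intro k
    refine (degreeOf_prod_le' _ _ _).trans ?_
    calc ∑ j ∈ Finset.range (α k), degreeOf i (X k - C (p k j) : MvPolynomial (Fin m) ℝ)
        ≤ ∑ _j ∈ Finset.range (α k), (if i = k then 1 else 0) :=
          Finset.sum_le_sum fun j _ => degreeOf_X_sub_C_le i k _
      _ = if i = k then α k else 0 := by by_cases h : i = k <;> simp [h]
  calc ∑ k, degreeOf i (∏ j ∈ Finset.range (α k), (X k - C (p k j)) : MvPolynomial (Fin m) ℝ)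
      ≤ ∑ k, if i = k then α k else 0 := Finset.sum_le_sum fun k _ => h1 k
    _ = α i := by simp

lemma newton_mem_PiA {m : ℕ} {A : Finset (Fin m → ℕ)} (hA : CompleteIdx A)
    (p : Fin m → ℕ → ℝ) {α : Fin m → ℕ} (hα : α ∈ A) : newton p α ∈ PiA m A := by
  rw [(newton p α).as_sum]
  refine Submodule.sum_mem _ fun d hd => ?_
  have hdA : (⇑d : Fin m → ℕ) ∈ A := by
    refine hA α hα _ fun i => ?_
    exact le_trans (MvPolynomial.degreeOf_le_iff.1 le_rfl d hd) (degreeOf_newton_le p α i)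
  have hmono : (∏ i, X i ^ d i : MvPolynomial (Fin m) ℝ) = monomial d 1 := by
    rw [← MvPolynomial.prod_X_pow_eq_monomial]
    exact (Finset.prod_subset (Finset.subset_univ _)
      (fun i _ hi => by rw [Finsupp.notMem_support_iff.1 hi, pow_zero])).symm
  have hgen : (monomial d (1 : ℝ) : MvPolynomial (Fin m) ℝ) ∈
      ((fun α : Fin m → ℕ => ∏ i, X i ^ α i) '' ↑A) := ⟨⇑d, hdA, hmono⟩
  have : (monomial d (coeff d (newton p α)) : MvPolynomial (Fin m) ℝ)
      = coeff d (newton p α) • monomial d 1 := by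
    rw [MvPolynomial.smul_monomial, smul_eq_mul, mul_one]
  rw [this]
  exact Submodule.smul_mem _ _ (Submodule.subset_span hgen)

/-- (Multivariate Newton interpolation.) For any function `f`, there
are unique coefficients `c_α`, `α ∈ A`, such that `Q_{f,A} = Σ_{α∈A} c_α N_α`
interpolates `f` on `P_A`; moreover `Q_{f,A}` is the unique interpolant of `f` in `Π_A`. -/
theorem newton_interpolation (m : ℕ) (A : Finset (Fin m → ℕ))
    (hA : CompleteIdx A) (p : Fin m → ℕ → ℝ) (hp : GenDistinct A p)
    (f : (Fin m → ℝ) → ℝ) :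
    (∃! c : {α // α ∈ A} → ℝ,
      ∀ β ∈ A, eval (node p β) (∑ α ∈ A.attach, c α • newton p ↑α) = f (node p β)) ∧
    (∀ c : {α // α ∈ A} → ℝ,
      (∀ β ∈ A, eval (node p β) (∑ α ∈ A.attach, c α • newton p ↑α) = f (node p β)) →
      ∀ Q ∈ PiA m A, (∀ β ∈ A, eval (node p β) Q = f (node p β)) →
        Q = ∑ α ∈ A.attach, c α • newton p ↑α) := by
  classical
  set ι := {α // α ∈ A}
  -- The linear map sending coefficients to the Newton combination
  set T : (ι → ℝ) →ₗ[ℝ] MvPolynomial (Fin m) ℝ :=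
    Fintype.linearCombination ℝ (fun α : ι => newton p ↑α) with hTdef
  have hT : ∀ c : ι → ℝ, T c = ∑ α ∈ A.attach, c α • newton p ↑α := by
    intro c
    rw [hTdef, Fintype.linearCombination_apply, ← Finset.univ_eq_attach]
  -- The evaluation map at the nodes
  set Ev : MvPolynomial (Fin m) ℝ →ₗ[ℝ] (ι → ℝ) :=
    { toFun := fun Q β => eval (node p ↑β) Q
      map_add' := fun Q R => by funext β; simp
      map_smul' := fun r Q => by funext β; simp [MvPolynomial.smul_eval] } with hEvdef
  set L : (ι → ℝ) →ₗ[ℝ] (ι → ℝ) := Ev.comp T with hLdef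
  have hLc : ∀ (c : ι → ℝ) (β : ι), L c β = eval (node p ↑β) (T c) := by
    intro c β; rfl
  have hLc' : ∀ (c : ι → ℝ) (β : ι),
      L c β = ∑ α ∈ Finset.univ, c α * eval (node p ↑β) (newton p ↑α) := by
    intro c β
    rw [hLc, hT, ← Finset.univ_eq_attach, map_sum]
    exact Finset.sum_congr rfl fun α _ => by rw [MvPolynomial.smul_eval]
  -- Injectivity of L (triangularity argument)
  have hLinj : Function.Injective L := by
    rw [← LinearMap.ker_eq_bot, LinearMap.ker_eq_bot']
    intro c hc
    by_contra hne
    have hS : (Finset.univ.filter fun α : ι => c α ≠ 0).Nonempty := by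
      rcases Function.ne_iff.1 hne with ⟨α, hα⟩
      exact ⟨α, Finset.mem_filter.2 ⟨Finset.mem_univ _, hα⟩⟩
    obtain ⟨β, hβS, hmin⟩ := Finset.exists_min_image _
      (fun α : ι => ∑ i, (↑α : Fin m → ℕ) i) hS
    have hcβ : c β ≠ 0 := (Finset.mem_filter.1 hβS).2
    have h0 : L c β = 0 := by rw [hc]; rfl
    rw [hLc' c β, Finset.sum_eq_single β] at h0
    · exact eval_newton_ne_zero hp β.2 (fun i => le_rfl)
        ((mul_eq_zero.1 h0).resolve_left hcβ)
    · intro α _ hαβ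
      by_cases hcα : c α = 0
      · rw [hcα, zero_mul]
      · have hα : eval (node p ↑β) (newton p ↑α) = 0 := by
          by_contra hev
          have hle : ∀ i, (↑α : Fin m → ℕ) i ≤ (↑β : Fin m → ℕ) i := by
            intro i
            by_contra h
            push_neg at h
            exact hev (eval_newton_eq_zero p i h)
          have h1 : ∑ i, (↑β : Fin m → ℕ) i ≤ ∑ i, (↑α : Fin m → ℕ) i :=
            hmin α (Finset.mem_filter.2 ⟨Finset.mem_univ _, hcα⟩)
          have h2 : ∑ i, (↑α : Fin m → ℕ) i ≤ ∑ i, (↑β : Fin m → ℕ) i :=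
            Finset.sum_le_sum fun i _ => hle i
          have heq : ∀ i ∈ Finset.univ, (↑α : Fin m → ℕ) i = (↑β : Fin m → ℕ) i :=
            (Finset.sum_eq_sum_iff_of_le fun i _ => hle i).1 (le_antisymm h2 h1)
          exact hαβ (Subtype.ext (funext fun i => heq i (Finset.mem_univ i)))
        rw [hα, mul_zero]
    · intro h; exact absurd (Finset.mem_univ β) h
  have hLsurj : Function.Surjective L := (LinearMap.injective_iff_surjective).1 hLinj
  set g : ι → ℝ := fun β => f (node p ↑β) with hgdef
  -- the interpolation condition in terms of L
  have hiff : ∀ c : ι → ℝ,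
      (∀ β ∈ A, eval (node p β) (∑ α ∈ A.attach, c α • newton p ↑α) = f (node p β)) ↔
        L c = g := by
    intro c
    constructor
    · intro h
      funext β
      rw [hLc, hT]
      exact h ↑β β.2
    · intro h β hβ
      have := congrFun h (⟨β, hβ⟩ : ι)
      rw [hLc, hT] at this
      exact this
  obtain ⟨c₀, hc₀⟩ := hLsurj g
  have hTinj : Function.Injective T := by
    intro a b h
    exact hLinj (by rw [hLdef, LinearMap.comp_apply, LinearMap.comp_apply, h])
  -- range T = PiA
  have hle : LinearMap.range T ≤ PiA m A := by
    rintro _ ⟨c, rfl⟩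
    rw [hT]
    exact Submodule.sum_mem _ fun α _ =>
      Submodule.smul_mem _ _ (newton_mem_PiA hA p α.2)
  haveI : FiniteDimensional ℝ (PiA m A) :=
    FiniteDimensional.span_of_finite ℝ (A.finite_toSet.image _)
  have hrange : LinearMap.range T = PiA m A := by
    refine Submodule.eq_of_le_of_finrank_le hle ?_
    have h1 : Module.finrank ℝ (LinearMap.range T) = A.card := by
      rw [LinearMap.finrank_range_of_inj hTinj, Module.finrank_pi, Fintype.card_coe]
    have h2 : Module.finrank ℝ (PiA m A) ≤ A.card := by
      have : PiA m A = Submodule.span ℝ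
          ((A.image fun α : Fin m → ℕ => ∏ i, X i ^ α i : Finset (MvPolynomial (Fin m) ℝ)) :
            Set (MvPolynomial (Fin m) ℝ)) := by
        rw [PiA, Finset.coe_image]
      rw [this]
      exact le_trans (finrank_span_finset_le_card _) (Finset.card_image_le)
    rw [h1]; exact h2
  refine ⟨⟨c₀, (hiff c₀).2 hc₀, fun c' hc' => hLinj (by rw [(hiff c').1 hc', hc₀])⟩, ?_⟩
  intro c hc Q hQ hQint
  obtain ⟨d, rfl⟩ : Q ∈ LinearMap.range T := hrange ▸ hQ
  have hd : L d = g := by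
    funext β
    rw [hLc]
    exact hQint ↑β β.2
  have : d = c := hLinj (by rw [hd, ← (hiff c).1 hc])
  rw [this, ← hT]

end
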